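/- Let N be a positive integer, and for each i in a nonempty finite set S let N_i, ν_i be positive integers with N_i ∣ N. Fix 1 ≤ d ≤ N and suppose the set G_d of nonempty subsets I ⊂ S with gcd_{i∈I} N_i ∣ d and an auxiliary predicate E(I) (nonemptiness of the stratum) is nonempty. Define C_m := min over I ∈ G_m and a ∈ ℕ^I with Σ_{i∈I} a_i N_i = m of Σ_{i∈I} a_i ν_i (with C_m = +∞ if no such representation exists), and suppose N is divisible by lcm of all N_i so that G_{lN+d} = G_d for all l ≥ 0. Then the sequence l ↦ C_{lN+d}/(lN+d) is (weakly) decreasing in l, for l large enough that C_{lN+d} < ∞. -/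

import Mathlib

open scoped BigOperators

/-- Theorem 1.8(2), monotonicity: with `C m` the minimal value of `∑ aᵢνᵢ` over
representations `∑ aᵢNᵢ = m` supported on a stratum `I ∈ G` (`+∞` if none exists),
the sequence `C (lN+d)/(lN+d)` weakly decreases in `l` (stated in `ℕ∞` by
cross-multiplication, which also encodes that finiteness propagates). -/
theorem stmt9 {ι : Type*} [Fintype ι] [Nonempty ι] [DecidableEq ι]
    (Nf νf : ι → ℕ) (hNf : ∀ i, 0 < Nf i) (hνf : ∀ i, 0 < νf i)
    (N d : ℕ) (hd1 : 1 ≤ d) (hdN : d ≤ N) (hdvd : ∀ i, Nf i ∣ N)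
    (G : Finset (Finset ι)) (hG : G.Nonempty)
    (hGne : ∀ I ∈ G, I.Nonempty) (hGgcd : ∀ I ∈ G, I.gcd Nf ∣ d)
    (C : ℕ → ℕ∞)
    (hC : ∀ m, C m = sInf ((fun v : ℕ => (v : ℕ∞)) ''
      {v | ∃ I ∈ G, ∃ a : ι → ℕ, (∀ i, i ∉ I → a i = 0) ∧
        ∑ i ∈ I, a i * Nf i = m ∧ v = ∑ i ∈ I, a i * νf i})) :
    ∀ l : ℕ, C ((l + 1) * N + d) * ((l * N + d : ℕ) : ℕ∞)
      ≤ C (l * N + d) * (((l + 1) * N + d : ℕ) : ℕ∞) := by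
  intro l
  set m := l * N + d with hm
  set m' := (l + 1) * N + d with hm'
  -- if C m = ⊤, RHS is ⊤
  by_cases htop : C m = ⊤
  · rw [htop, ENat.top_mul (by exact_mod_cast (Nat.add_pos_right _ hd1).ne' : ((m' : ℕ∞)) ≠ 0)]
    exact le_top
  -- otherwise the defining set of C m is nonempty and its sInf is attained
  have hne : ((fun v : ℕ => (v : ℕ∞)) ''
      {v | ∃ I ∈ G, ∃ a : ι → ℕ, (∀ i, i ∉ I → a i = 0) ∧
        ∑ i ∈ I, a i * Nf i = m ∧ v = ∑ i ∈ I, a i * νf i}).Nonempty := by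
    by_contra h
    rw [Set.not_nonempty_iff_eq_empty] at h
    exact htop (by rw [hC m, h, sInf_empty])
  have hmem := csInf_mem hne
  rw [← hC m] at hmem
  obtain ⟨v, ⟨I, hIG, a, ha0, hsum, hval⟩, hCv⟩ := hmem
  -- pick i₁ ∈ I minimizing ν/N
  obtain ⟨i₁, hi₁I, hi₁min⟩ :=
    I.exists_min_image (fun i => (νf i : ℚ) / Nf i) (hGne I hIG)
  have hkey : ∀ j ∈ I, νf i₁ * Nf j ≤ νf j * Nf i₁ := by
    intro j hj
    have := hi₁min j hj
    rw [div_le_div_iff₀ (by exact_mod_cast hNf i₁) (by exact_mod_cast hNf j)] at this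
    exact_mod_cast this
  -- mediant inequality
  have hmed : νf i₁ * m ≤ Nf i₁ * v := by
    rw [← hsum, hval, Finset.mul_sum, Finset.mul_sum]
    apply Finset.sum_le_sum
    intro j hj
    calc νf i₁ * (a j * Nf j) = a j * (νf i₁ * Nf j) := by ring
      _ ≤ a j * (νf j * Nf i₁) := Nat.mul_le_mul_left _ (hkey j hj)
      _ = Nf i₁ * (a j * νf j) := by ring
  set k := N / Nf i₁ with hk
  have hkN : k * Nf i₁ = N := Nat.div_mul_cancel (hdvd i₁)
  -- new representation for m'
  set a' : ι → ℕ := fun i => a i + if i = i₁ then k else 0 with ha'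
  have hδ : ∀ f : ι → ℕ, ∑ i ∈ I, (if i = i₁ then k else 0) * f i = k * f i₁ := by
    intro f
    rw [Finset.sum_eq_single i₁]
    · simp
    · intro b _ hb; simp [hb]
    · intro h; exact absurd hi₁I h
  have hsum' : ∑ i ∈ I, a' i * Nf i = m' := by
    simp only [ha', add_mul, Finset.sum_add_distrib, hsum, hδ, hkN]
    rw [hm, hm']; ring
  have hval' : ∑ i ∈ I, a' i * νf i = v + k * νf i₁ := by
    simp only [ha', add_mul, Finset.sum_add_distrib, ← hval, hδ]
  have ha0' : ∀ i, i ∉ I → a' i = 0 := by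
    intro i hi
    have : i ≠ i₁ := fun h => hi (h ▸ hi₁I)
    simp [ha', ha0 i hi, this]
  have hCm' : C m' ≤ ((v + k * νf i₁ : ℕ) : ℕ∞) := by
    rw [hC m']
    exact csInf_le (OrderBot.bddBelow _)
      ⟨v + k * νf i₁, ⟨I, hIG, a', ha0', hsum', hval'.symm⟩, rfl⟩
  rw [← hCv]
  calc C m' * (m : ℕ∞) ≤ ((v + k * νf i₁ : ℕ) : ℕ∞) * (m : ℕ∞) :=
        mul_le_mul_left hCm' _
    _ ≤ (v : ℕ∞) * (m' : ℕ∞) := by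
        rw [← Nat.cast_mul, ← Nat.cast_mul, Nat.cast_le]
        have h2 : k * νf i₁ * m ≤ v * N := by
          have := Nat.mul_le_mul_left k hmed
          calc k * νf i₁ * m = k * (νf i₁ * m) := by ring
            _ ≤ k * (Nf i₁ * v) := this
            _ = v * (k * Nf i₁) := by ring
            _ = v * N := by rw [hkN]
        calc (v + k * νf i₁) * m = v * m + k * νf i₁ * m := by ring
          _ ≤ v * m + v * N := by omega
          _ = v * m' := by rw [hm, hm']; ring
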